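/- For isotropic state noise Q = σ²Id with Φ symmetric positive semidefinite, the proximity operator of θf₁, where f₁(A) = (K/(2σ²)) tr(Σ − CAᵀ − ACᵀ + AΦAᵀ), is prox_{θf₁}(Ã) = ((θK/σ²) C + Ã) ((θK/σ²) Φ + Id)^{-1}. -/

import Mathlib

open scoped Matrix
open Finset

private lemma trace_swap {N : ℕ} (X Y : Matrix (Fin N) (Fin N) ℝ) :
    (X * Yᵀ).trace = (Y * Xᵀ).trace := by
  rw [← Matrix.trace_transpose (Y * Xᵀ), Matrix.transpose_mul, Matrix.transpose_transpose,
    Matrix.trace_mul_comm]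

private lemma psd_smul {N : ℕ} {l : ℝ} (hl : 0 ≤ l) {Φ : Matrix (Fin N) (Fin N) ℝ}
    (hΦ : Φ.PosSemidef) : (l • Φ).PosSemidef := by
  refine ⟨?_, fun x => ?_⟩
  · unfold Matrix.IsHermitian
    rw [Matrix.conjTranspose_smul, hΦ.1]
    simp
  · exact (hΦ.smul hl).2 x

private lemma diag_quad {N : ℕ} (M B : Matrix (Fin N) (Fin N) ℝ) (i : Fin N) :
    (B * M * Bᵀ) i i = dotProduct (B i) (M *ᵥ (B i)) := by
  simp only [Matrix.mul_apply, Matrix.transpose_apply, Matrix.mulVec, dotProduct,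
    Finset.sum_mul, Finset.mul_sum]
  rw [Finset.sum_comm]
  refine Finset.sum_congr rfl fun j _ => Finset.sum_congr rfl fun k _ => by ring

/-- For isotropic state noise `Q = σ²Id` with `Φ` symmetric positive
semidefinite, the proximity operator of `θ f₁`, where
`f₁(A) = (K/(2σ²)) tr(Σ − CAᵀ − ACᵀ + AΦAᵀ)`, is
`((θK/σ²) C + Ã)((θK/σ²) Φ + Id)⁻¹` : it is the unique minimizer of
`A ↦ θ f₁(A) + ½‖A − Ã‖_F²`. -/
theorem prox_quadratic_isotropic (N : ℕ) (σ θ K : ℝ)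
    (hσ : 0 < σ) (hθ : 0 < θ) (hK : 0 < K)
    (Sig C Φ : Matrix (Fin N) (Fin N) ℝ) (hΦ : Φ.PosSemidef)
    (At : Matrix (Fin N) (Fin N) ℝ)
    (f₁ F : Matrix (Fin N) (Fin N) ℝ → ℝ)
    (hf₁ : ∀ A, f₁ A = (K / (2 * σ ^ 2)) *
      (Sig - C * Aᵀ - A * Cᵀ + A * Φ * Aᵀ).trace)
    (hF : ∀ A, F A = θ * f₁ A + (1 / 2) * (∑ n, ∑ m, (A n m - At n m) ^ 2))
    (P : Matrix (Fin N) (Fin N) ℝ)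
    (hP : P = ((θ * K / σ ^ 2) • C + At) * ((θ * K / σ ^ 2) • Φ + 1)⁻¹) :
    (∀ A, F P ≤ F A) ∧ (∀ A, (∀ B, F A ≤ F B) → A = P) := by
  set l : ℝ := θ * K / σ ^ 2 with hl_def
  have hl : 0 < l := by positivity
  set M : Matrix (Fin N) (Fin N) ℝ := l • Φ + 1 with hM_def
  set L : Matrix (Fin N) (Fin N) ℝ := l • C + At with hL_def
  have hMpd : M.PosDef := Matrix.PosDef.posSemidef_add (psd_smul hl.le hΦ) Matrix.PosDef.one
  have hMsym : Mᵀ = M := by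
    have h1 : Mᵀ = Mᴴ := by
      ext i j
      simp [Matrix.conjTranspose_apply]
    rw [h1, hMpd.isHermitian]
  have hdet : IsUnit M.det := hMpd.det_pos.ne'.isUnit
  have hPM : P * M = L := by
    rw [hP, Matrix.mul_assoc, Matrix.nonsing_inv_mul _ hdet, Matrix.mul_one]
  -- canonical form of F
  set c₀ : ℝ := θ * (K / (2 * σ ^ 2)) * Sig.trace + (1 / 2) * (At * Atᵀ).trace with hc₀
  have hFA : ∀ A, F A = c₀ + (1 / 2) * (A * M * Aᵀ).trace - (A * Lᵀ).trace := by
    intro A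
    rw [hF, hf₁]
    have frob : ∑ n, ∑ m, (A n m - At n m) ^ 2 = ((A - At) * (A - At)ᵀ).trace := by
      simp [Matrix.trace, Matrix.mul_apply, Matrix.diag, pow_two, Matrix.sub_apply]
    have expand1 : ((A - At) * (A - At)ᵀ).trace
        = (A * Aᵀ).trace - 2 * (A * Atᵀ).trace + (At * Atᵀ).trace := by
      rw [Matrix.transpose_sub, Matrix.sub_mul, Matrix.mul_sub, Matrix.mul_sub,
        Matrix.trace_sub, Matrix.trace_sub, Matrix.trace_sub, trace_swap At A]
      ring
    have expand2 : (A * M * Aᵀ).trace = l * (A * Φ * Aᵀ).trace + (A * Aᵀ).trace := by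
      rw [hM_def, Matrix.mul_add, Matrix.mul_one, Matrix.add_mul, Matrix.trace_add,
        Matrix.mul_smul, Matrix.smul_mul, Matrix.trace_smul, smul_eq_mul]
    have expand3 : (A * Lᵀ).trace = l * (A * Cᵀ).trace + (A * Atᵀ).trace := by
      rw [hL_def, Matrix.transpose_add, Matrix.transpose_smul, Matrix.mul_add,
        Matrix.trace_add, Matrix.mul_smul, Matrix.trace_smul, smul_eq_mul]
    have expand4 : (Sig - C * Aᵀ - A * Cᵀ + A * Φ * Aᵀ).trace
        = Sig.trace - 2 * (A * Cᵀ).trace + (A * Φ * Aᵀ).trace := by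
      rw [Matrix.trace_add, Matrix.trace_sub, Matrix.trace_sub, trace_swap C A]
      ring
    rw [frob, expand1, expand2, expand3, expand4, hc₀, hl_def]
    field_simp
    ring
  -- key identity
  have key : ∀ A, F A = F P + (1 / 2) * ((A - P) * M * (A - P)ᵀ).trace := by
    intro A
    have hPL : (P * M * Pᵀ).trace = (P * Lᵀ).trace := by
      rw [hPM, trace_swap]
    have hAMP : (A * M * Pᵀ).trace = (A * Lᵀ).trace := by
      have : M * Pᵀ = (P * M)ᵀ := by rw [Matrix.transpose_mul, hMsym]
      rw [Matrix.mul_assoc, this, hPM]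
    have hPMA : (P * M * Aᵀ).trace = (A * Lᵀ).trace := by
      rw [hPM, trace_swap]
    have expand : ((A - P) * M * (A - P)ᵀ).trace
        = (A * M * Aᵀ).trace - (A * M * Pᵀ).trace - (P * M * Aᵀ).trace
          + (P * M * Pᵀ).trace := by
      simp only [Matrix.transpose_sub, Matrix.sub_mul, Matrix.mul_sub, Matrix.trace_sub]
      ring
    rw [hFA A, hFA P, expand, hPL, hAMP, hPMA]
    ring
  -- positivity of the quadratic form
  have hQnn : ∀ B : Matrix (Fin N) (Fin N) ℝ, 0 ≤ (B * M * Bᵀ).trace := by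
    intro B
    rw [Matrix.trace]
    refine Finset.sum_nonneg fun i _ => ?_
    rw [Matrix.diag, diag_quad]
    have := hMpd.posSemidef.dotProduct_mulVec_nonneg (B i)
    simpa using this
  have hQpos : ∀ B : Matrix (Fin N) (Fin N) ℝ, B ≠ 0 → 0 < (B * M * Bᵀ).trace := by
    intro B hB
    rw [Matrix.trace]
    have : ∃ i, B i ≠ 0 := by
      by_contra h
      push_neg at h
      exact hB (by ext i j; simp [h i])
    obtain ⟨i, hi⟩ := this
    refine Finset.sum_pos' (fun j _ => ?_) ⟨i, Finset.mem_univ i, ?_⟩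
    · rw [Matrix.diag, diag_quad]
      simpa using hMpd.posSemidef.dotProduct_mulVec_nonneg (B j)
    · rw [Matrix.diag, diag_quad]
      simpa using hMpd.dotProduct_mulVec_pos hi
  constructor
  · intro A
    have := hQnn (A - P)
    rw [key A]
    linarith
  · intro A hA
    by_contra hne
    have h1 : F A ≤ F P := hA P
    have h2 : 0 < ((A - P) * M * (A - P)ᵀ).trace :=
      hQpos _ (sub_ne_zero.mpr hne)
    have := key A
    linarith
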